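/- The pair (c*, (d*_t)) with c* := V^{-1}(K + G H^{-1} h) and d*_t := (r_t V_t)^{-1} M_t H^{-1} h satisfies the constraint kappa = G' c* + sum_{t=1}^tau M_t' d*_t, achieves objective value Q(c*, d*) = h' H^{-1} h - K' V^{-1} K, and for every (c, d_1, ..., d_tau) satisfying the constraint kappa = G' c + sum_t M_t' d_t one has Q(c, d) >= h' H^{-1} h - K' V^{-1} K, with equality only if c = c* and d_t = d*_t for all t. (This constrained quadratic minimization underlies the paper's efficiency Proposition for the bias-corrected estimator with combined aggregate and micro moments.) -/

import Mathlib

open Matrix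

lemma aux_sum_mulVec {ι a b : Type*} [Fintype b] (s : Finset ι)
    (A : ι → Matrix a b ℝ) (v : b → ℝ) :
    (∑ t ∈ s, A t) *ᵥ v = ∑ t ∈ s, A t *ᵥ v := by
  induction s using Finset.cons_induction with
  | empty => simp
  | cons _ _ _ ih => simp [Matrix.add_mulVec, ih]

lemma aux_sum_dot {ι b : Type*} [Fintype b] (s : Finset ι)
    (v : ι → b → ℝ) (w : b → ℝ) :
    (∑ t ∈ s, v t) ⬝ᵥ w = ∑ t ∈ s, v t ⬝ᵥ w := by
  induction s using Finset.cons_induction with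
  | empty => simp
  | cons _ _ _ ih => simp [add_dotProduct, ih]

lemma aux_dot_trans {a b : Type*} [Fintype a] [Fintype b] (A : Matrix a b ℝ)
    (x : a → ℝ) (y : b → ℝ) : (Aᵀ *ᵥ x) ⬝ᵥ y = x ⬝ᵥ (A *ᵥ y) := by
  rw [mulVec_transpose, ← dotProduct_mulVec]

lemma aux_dot_symm {n : Type*} [Fintype n] {A : Matrix n n ℝ} (hA : Aᵀ = A)
    (x y : n → ℝ) : x ⬝ᵥ (A *ᵥ y) = y ⬝ᵥ (A *ᵥ x) := by
  rw [dotProduct_mulVec, ← mulVec_transpose, hA, dotProduct_comm]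

lemma aux_pd_pos {n : Type*} [Fintype n] {A : Matrix n n ℝ} (hA : A.PosDef)
    {x : n → ℝ} (hx : x ≠ 0) : 0 < x ⬝ᵥ (A *ᵥ x) := by
  simpa using hA.dotProduct_mulVec_pos hx

lemma aux_pd_nonneg {n : Type*} [Fintype n] {A : Matrix n n ℝ} (hA : A.PosDef)
    (x : n → ℝ) : 0 ≤ x ⬝ᵥ (A *ᵥ x) := by
  simpa using hA.posSemidef.dotProduct_mulVec_nonneg x

lemma aux_pd_smul {n : Type*} [Fintype n] [DecidableEq n] {A : Matrix n n ℝ} (hA : A.PosDef)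
    {c : ℝ} (hc : 0 < c) : (c • A).PosDef := by
  refine .of_dotProduct_mulVec_pos ?_ fun x hx => ?_
  · rw [IsHermitian, conjTranspose_smul, hA.1]; simp
  · rw [smul_mulVec, dotProduct_smul]
    exact smul_pos hc (by simpa using hA.dotProduct_mulVec_pos hx)

lemma aux_symm_of_pd {n : Type*} [Fintype n] {A : Matrix n n ℝ} (hA : A.PosDef) : Aᵀ = A := by
  rw [← conjTranspose_eq_transpose_of_trivial]; exact hA.1

/-- The weights `c* = V⁻¹(K + G H⁻¹ h)` and `d*_t = (r_t V_t)⁻¹ M_t H⁻¹ h`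
satisfy the constraint `κ = G' c + ∑_t M_t' d_t`, attain the objective value
`Q(c*, d*) = h' H⁻¹ h - K' V⁻¹ K`, and uniquely minimize the objective
`Q(c, d) = c' V c - 2 c' K + ∑_t r_t d_t' V_t d_t` over all `(c, d)` satisfying the
constraint. Here `H = G' V⁻¹ G + ∑_t M_t' (r_t V_t)⁻¹ M_t` and `h = κ - G' V⁻¹ K`. -/
theorem efficiency_quadratic_minimization
    {m p ℓ τ : ℕ} (hm : 0 < m) (hp : 0 < p) (hℓ : 0 < ℓ)
    (V : Matrix (Fin m) (Fin m) ℝ) (hV : V.PosDef)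
    (Vt : Fin τ → Matrix (Fin ℓ) (Fin ℓ) ℝ) (hVt : ∀ t, (Vt t).PosDef)
    (r : Fin τ → ℝ) (hr : ∀ t, 0 < r t)
    (G : Matrix (Fin m) (Fin p) ℝ) (M : Fin τ → Matrix (Fin ℓ) (Fin p) ℝ)
    (K : Fin m → ℝ) (κ : Fin p → ℝ)
    (H : Matrix (Fin p) (Fin p) ℝ)
    (hH : H = Gᵀ * V⁻¹ * G + ∑ t, (M t)ᵀ * (r t • Vt t)⁻¹ * M t)
    (hHpd : H.PosDef)
    (h : Fin p → ℝ) (hh : h = κ - Gᵀ *ᵥ (V⁻¹ *ᵥ K))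
    (Q : (Fin m → ℝ) → (Fin τ → Fin ℓ → ℝ) → ℝ)
    (hQ : ∀ c d, Q c d = c ⬝ᵥ (V *ᵥ c) - 2 * (c ⬝ᵥ K) + ∑ t, r t * (d t ⬝ᵥ (Vt t *ᵥ d t)))
    (cstar : Fin m → ℝ) (hc : cstar = V⁻¹ *ᵥ (K + G *ᵥ (H⁻¹ *ᵥ h)))
    (dstar : Fin τ → Fin ℓ → ℝ)
    (hd : ∀ t, dstar t = (r t • Vt t)⁻¹ *ᵥ (M t *ᵥ (H⁻¹ *ᵥ h))) :
    (κ = Gᵀ *ᵥ cstar + ∑ t, (M t)ᵀ *ᵥ dstar t) ∧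
    (Q cstar dstar = h ⬝ᵥ (H⁻¹ *ᵥ h) - K ⬝ᵥ (V⁻¹ *ᵥ K)) ∧
    (∀ (c : Fin m → ℝ) (d : Fin τ → Fin ℓ → ℝ),
      κ = Gᵀ *ᵥ c + ∑ t, (M t)ᵀ *ᵥ d t →
        (h ⬝ᵥ (H⁻¹ *ᵥ h) - K ⬝ᵥ (V⁻¹ *ᵥ K) ≤ Q c d ∧
          (Q c d = h ⬝ᵥ (H⁻¹ *ᵥ h) - K ⬝ᵥ (V⁻¹ *ᵥ K) → c = cstar ∧ ∀ t, d t = dstar t))) := by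
  set u : Fin p → ℝ := H⁻¹ *ᵥ h with hu
  set W : Fin τ → Matrix (Fin ℓ) (Fin ℓ) ℝ := fun t => r t • Vt t with hW
  have hWpd : ∀ t, (W t).PosDef := fun t => aux_pd_smul (hVt t) (hr t)
  -- invertibility facts
  have hVd : IsUnit V.det := (Matrix.isUnit_iff_isUnit_det _).mp hV.isUnit
  have hHd : IsUnit H.det := (Matrix.isUnit_iff_isUnit_det _).mp hHpd.isUnit
  have hWd : ∀ t, IsUnit (W t).det := fun t => (Matrix.isUnit_iff_isUnit_det _).mp (hWpd t).isUnit
  have hVsymm : Vᵀ = V := aux_symm_of_pd hV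
  have hVinvsymm : (V⁻¹)ᵀ = V⁻¹ := aux_symm_of_pd hV.inv
  -- key vector identities
  have hHu : H *ᵥ u = h := by
    rw [hu, mulVec_mulVec, Matrix.mul_nonsing_inv _ hHd, one_mulVec]
  have hVc : V *ᵥ cstar = K + G *ᵥ u := by
    rw [hc, mulVec_mulVec, Matrix.mul_nonsing_inv _ hVd, one_mulVec]
  have hWdstar : ∀ t, W t *ᵥ dstar t = M t *ᵥ u := by
    intro t
    rw [hd t, mulVec_mulVec, Matrix.mul_nonsing_inv _ (hWd t), one_mulVec]
  -- the constraint for (cstar, dstar)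
  have hconstr : Gᵀ *ᵥ cstar + ∑ t, (M t)ᵀ *ᵥ dstar t = κ := by
    have e1 : Gᵀ *ᵥ cstar + ∑ t, (M t)ᵀ *ᵥ dstar t
        = Gᵀ *ᵥ (V⁻¹ *ᵥ K) + H *ᵥ u := by
      rw [hH, Matrix.add_mulVec, aux_sum_mulVec]
      simp only [hc, hd, mulVec_add, ← mulVec_mulVec]
      abel
    rw [e1, hHu, hh]
    abel
  have hκu : κ ⬝ᵥ u = cstar ⬝ᵥ (G *ᵥ u) + ∑ t, dstar t ⬝ᵥ (M t *ᵥ u) := by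
    rw [← hconstr, add_dotProduct, aux_sum_dot]
    simp only [aux_dot_trans]
  -- value of the objective at the optimum
  have hcK : cstar ⬝ᵥ K = K ⬝ᵥ (V⁻¹ *ᵥ K) + u ⬝ᵥ (Gᵀ *ᵥ (V⁻¹ *ᵥ K)) := by
    have : cstar ⬝ᵥ K = (K + G *ᵥ u) ⬝ᵥ (V⁻¹ *ᵥ K) := by
      rw [hc, dotProduct_comm, aux_dot_symm hVinvsymm]
    rw [this, add_dotProduct]
    congr 1
    have h2 := aux_dot_trans Gᵀ u (V⁻¹ *ᵥ K)
    rw [transpose_transpose] at h2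
    exact h2
  have hQstar : Q cstar dstar = h ⬝ᵥ u - K ⬝ᵥ (V⁻¹ *ᵥ K) := by
    rw [hQ, hVc, dotProduct_add]
    have e2 : ∀ t, r t * (dstar t ⬝ᵥ (Vt t *ᵥ dstar t)) = dstar t ⬝ᵥ (M t *ᵥ u) := by
      intro t
      rw [← hWdstar t, hW]
      simp [smul_mulVec, dotProduct_smul, mul_comm]
    simp only [e2]
    have e3 : h ⬝ᵥ u = κ ⬝ᵥ u - u ⬝ᵥ (Gᵀ *ᵥ (V⁻¹ *ᵥ K)) := by
      rw [hh, sub_dotProduct]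
      congr 1
      rw [dotProduct_comm]
    rw [e3, hκu, hcK]
    ring
  refine ⟨hconstr.symm, hQstar, ?_⟩
  intro c d hcd
  -- difference decomposition
  set e : Fin m → ℝ := c - cstar with he
  have hce : c = cstar + e := by rw [he]; abel
  have hdiff : Gᵀ *ᵥ e + ∑ t, (M t)ᵀ *ᵥ (d t - dstar t) = 0 := by
    have : (Gᵀ *ᵥ c + ∑ t, (M t)ᵀ *ᵥ d t) - (Gᵀ *ᵥ cstar + ∑ t, (M t)ᵀ *ᵥ dstar t) = 0 := by
      rw [← hcd, hconstr]; abel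
    rw [← this, he]
    simp only [mulVec_sub, Finset.sum_sub_distrib]
    abel
  have hQdiff : Q c d = Q cstar dstar + (e ⬝ᵥ (V *ᵥ e)
      + ∑ t, r t * ((d t - dstar t) ⬝ᵥ (Vt t *ᵥ (d t - dstar t)))) := by
    have cross : e ⬝ᵥ (G *ᵥ u) + ∑ t, (d t - dstar t) ⬝ᵥ (M t *ᵥ u) = 0 := by
      have h3 := congrArg (fun v => v ⬝ᵥ u) hdiff
      simpa only [add_dotProduct, aux_sum_dot, aux_dot_trans, zero_dotProduct] using h3
    have expc : c ⬝ᵥ (V *ᵥ c) = cstar ⬝ᵥ (V *ᵥ cstar) + 2 * (e ⬝ᵥ (V *ᵥ cstar))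
        + e ⬝ᵥ (V *ᵥ e) := by
      rw [hce]
      simp only [mulVec_add, dotProduct_add, add_dotProduct]
      rw [aux_dot_symm hVsymm cstar e]
      ring
    have expcK : c ⬝ᵥ K = cstar ⬝ᵥ K + e ⬝ᵥ K := by rw [hce, add_dotProduct]
    have expd : ∀ t, r t * (d t ⬝ᵥ (Vt t *ᵥ d t))
        = r t * (dstar t ⬝ᵥ (Vt t *ᵥ dstar t)) + 2 * ((d t - dstar t) ⬝ᵥ (M t *ᵥ u))
          + r t * ((d t - dstar t) ⬝ᵥ (Vt t *ᵥ (d t - dstar t))) := by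
      intro t
      have hdt : d t = dstar t + (d t - dstar t) := by abel
      have hmid : r t * ((d t - dstar t) ⬝ᵥ (Vt t *ᵥ dstar t))
          = (d t - dstar t) ⬝ᵥ (M t *ᵥ u) := by
        rw [← hWdstar t, hW]
        simp [smul_mulVec, dotProduct_smul, mul_comm]
      have hsymmt : (Vt t)ᵀ = Vt t := aux_symm_of_pd (hVt t)
      calc r t * (d t ⬝ᵥ (Vt t *ᵥ d t))
          = r t * ((dstar t + (d t - dstar t)) ⬝ᵥ (Vt t *ᵥ (dstar t + (d t - dstar t)))) := by
            rw [← hdt]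
        _ = r t * (dstar t ⬝ᵥ (Vt t *ᵥ dstar t))
            + 2 * (r t * ((d t - dstar t) ⬝ᵥ (Vt t *ᵥ dstar t)))
            + r t * ((d t - dstar t) ⬝ᵥ (Vt t *ᵥ (d t - dstar t))) := by
            simp only [mulVec_add, dotProduct_add, add_dotProduct]
            rw [aux_dot_symm hsymmt (dstar t) (d t - dstar t)]
            ring
        _ = _ := by rw [hmid]
    have eVc : e ⬝ᵥ (V *ᵥ cstar) = e ⬝ᵥ K + e ⬝ᵥ (G *ᵥ u) := by
      rw [hVc, dotProduct_add]
    rw [hQ c d, hQ cstar dstar, expc, expcK, eVc]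
    simp only [expd]
    rw [Finset.sum_add_distrib, Finset.sum_add_distrib, ← Finset.mul_sum]
    have : e ⬝ᵥ (G *ᵥ u) = - ∑ t, (d t - dstar t) ⬝ᵥ (M t *ᵥ u) := by
      linarith [cross]
    rw [this]
    ring
  have term_nonneg : ∀ t ∈ Finset.univ, (0:ℝ) ≤ r t * ((d t - dstar t) ⬝ᵥ (Vt t *ᵥ (d t - dstar t))) :=
    fun t _ => mul_nonneg (hr t).le (aux_pd_nonneg (hVt t) _)
  have sum_nonneg : (0:ℝ) ≤ ∑ t, r t * ((d t - dstar t) ⬝ᵥ (Vt t *ᵥ (d t - dstar t))) :=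
    Finset.sum_nonneg term_nonneg
  have e_nonneg : (0:ℝ) ≤ e ⬝ᵥ (V *ᵥ e) := aux_pd_nonneg hV e
  constructor
  · rw [← hQstar]; rw [hQdiff]; linarith
  · intro hQeq
    rw [hQdiff, hQstar] at hQeq
    have hzero : e ⬝ᵥ (V *ᵥ e) + ∑ t, r t * ((d t - dstar t) ⬝ᵥ (Vt t *ᵥ (d t - dstar t))) = 0 := by
      linarith
    have he0 : e ⬝ᵥ (V *ᵥ e) = 0 := by linarith
    have hsum0 : ∑ t, r t * ((d t - dstar t) ⬝ᵥ (Vt t *ᵥ (d t - dstar t))) = 0 := by linarith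
    have hez : e = 0 := by
      by_contra hne
      exact absurd he0 (aux_pd_pos hV hne).ne'
    constructor
    · have := hce; rw [hez] at this; simpa using this
    · intro t
      have ht0 : r t * ((d t - dstar t) ⬝ᵥ (Vt t *ᵥ (d t - dstar t))) = 0 :=
        (Finset.sum_eq_zero_iff_of_nonneg term_nonneg).mp hsum0 t (Finset.mem_univ t)
      have hq0 : (d t - dstar t) ⬝ᵥ (Vt t *ᵥ (d t - dstar t)) = 0 :=
        (mul_eq_zero.mp ht0).resolve_left (hr t).ne'
      by_contra hne
      have hne' : d t - dstar t ≠ 0 := sub_ne_zero.mpr hne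
      exact absurd hq0 (aux_pd_pos (hVt t) hne').ne'
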